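/- Let V be a vector space over a field F, let {a,b} = [a,b] + λ(a) + μ(b) + s be a bi-affine bracket on V with Leibnizian Λ. If there exists o ∈ V such that the linearization of Λ at o vanishes (Λ̃_o(a,b,c) = 0 for all a,b,c), then the linearization of Λ at every point u ∈ V vanishes (Λ̃_u(a,b,c) = 0 for all a,b,c). -/
import Mathlib

/-- For the bi-affine bracket `{a,b} = B a b + lam a + mu b + s` on a vector space `V`
with Leibnizian `Λ(a,b,c) = {a,{b,c}} − {{a,b},c} + {{a,c},b}`: if the linearization of
`Λ` vanishes at some point `o`, then it vanishes at every point `u`. -/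
theorem leibnizian_linearization_vanishes_everywhere
    {F V : Type*} [Field F] [AddCommGroup V] [Module F V]
    (B : V →ₗ[F] V →ₗ[F] V) (lam mu : V →ₗ[F] V) (s : V)
    (br : V → V → V) (hbr : ∀ a b, br a b = B a b + lam a + mu b + s)
    (Λ : V → V → V → V)
    (hΛ : ∀ a b c, Λ a b c = br a (br b c) - br (br a b) c + br (br a c) b)
    (o : V)
    (ho : ∀ a b c : V,
      Λ a b c - Λ a b o - Λ a o c - Λ o b c
        + Λ a o o + Λ o b o + Λ o o c - Λ o o o = 0) :
    ∀ u a b c : V,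
      Λ a b c - Λ a b u - Λ a u c - Λ u b c
        + Λ a u u + Λ u b u + Λ u u c - Λ u u u = 0 := by
  have key : ∀ u a b c : V,
      Λ a b c - Λ a b u - Λ a u c - Λ u b c
        + Λ a u u + Λ u b u + Λ u u c - Λ u u u
      = B (a-u) (B (b-u) (c-u)) - B (B (a-u) (b-u)) (c-u)
          + B (B (a-u) (c-u)) (b-u) := by
    intro u a b c
    simp only [hΛ, hbr, map_add, map_sub, LinearMap.add_apply, LinearMap.sub_apply]
    abel
  have hT : ∀ x y z : V, B x (B y z) - B (B x y) z + B (B x z) y = 0 := by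
    intro x y z
    have := ho (x + o) (y + o) (z + o)
    rw [key] at this
    simpa using this
  intro u a b c
  rw [key]
  exact hT _ _ _
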